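/- Let ((g,[2]),D) be a ResLieDer pair over F, let n ≥ 1, and let (μ_i, σ_i, D_i)_{0≤i≤n} be a deformation of order n of ((g,[2]),D). Define the obstruction cochains by Ob_I³(x,y,z) = Σ_{i+j=n+1, i,j≥1} (μ_i(x,μ_j(y,z)) + μ_i(y,μ_j(z,x)) + μ_i(z,μ_j(x,y))), Ob_II³(x,y) = Σ_{i+j=n+1, i,j≥1} (μ_i(σ_j(x),y) + μ_i(x,μ_j(x,y))), Ob_I²(x,y) = Σ_{i+j=n+1, i,j≥1} (D_i(μ_j(x,y)) + μ_j(x,D_i(y)) + μ_j(y,D_i(x))), Ob_II²(x) = Σ_{i+j=n+1, i,j≥1} (D_i(σ_j(x)) + μ_j(x,D_i(x))). Then the deformation is extensible — i.e. there exist an alternating F-bilinear map μ_{n+1} : g×g → g, a map σ_{n+1} : g → g with σ_{n+1}(a·x) = a²·σ_{n+1}(x) and σ_{n+1}(x+y) = σ_{n+1}(x) + σ_{n+1}(y) + μ_{n+1}(x,y), and an F-linear map D_{n+1} : g → g such that the four deformation sum-equations also hold for k = n+1 — if and only if there exist an alternating F-bilinear map μ' : g×g → g, a map σ' : g → g with σ'(a·x)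 = a²·σ'(x) and σ'(x+y) = σ'(x) + σ'(y) + μ'(x,y), and an F-linear map D' : g → g with, for all x,y,z ∈ g: Ob_I³(x,y,z) = [x,μ'(y,z)] + [y,μ'(z,x)] + [z,μ'(x,y)] + μ'([x,y],z) + μ'([y,z],x) + μ'([z,x],y); Ob_II³(x,y) = [x,μ'(x,y)] + μ'(x^[2],y) + μ'([x,y],x) + [y,σ'(x)]; Ob_I²(x,y) = D'([x,y]) + [x,D'(y)] + [y,D'(x)] + D(μ'(x,y)) + μ'(D(x),y) + μ'(x,D(y)); Ob_II²(x) = D'(x^[2]) + [x,D'(x)] + D(σ'(x)) + μ'(x,D(x)). -/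

import Mathlib

lemma antidiag_split' {M : Type*} [AddCommMonoid M] (n : ℕ) (f : ℕ × ℕ → M) :
    ∑ p ∈ Finset.HasAntidiagonal.antidiagonal (n + 1), f p =
      f (0, n + 1) + f (n + 1, 0) +
        ∑ p ∈ Finset.HasAntidiagonal.antidiagonal (n + 1), (if 1 ≤ p.1 ∧ 1 ≤ p.2 then f p else 0) := by
  have hfe : Finset.filter (fun p : ℕ × ℕ => ¬(1 ≤ p.1 ∧ 1 ≤ p.2))
      (Finset.HasAntidiagonal.antidiagonal (n + 1)) = {(0, n + 1), (n + 1, 0)} := by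
    ext p
    simp only [Finset.mem_filter, Finset.HasAntidiagonal.mem_antidiagonal, Finset.mem_insert,
      Finset.mem_singleton, Prod.ext_iff]
    omega
  have h1 : ∑ p ∈ Finset.HasAntidiagonal.antidiagonal (n + 1), f p
      = ∑ p ∈ Finset.HasAntidiagonal.antidiagonal (n + 1),
        ((if 1 ≤ p.1 ∧ 1 ≤ p.2 then f p else 0)
          + (if ¬(1 ≤ p.1 ∧ 1 ≤ p.2) then f p else 0)) := by
    refine Finset.sum_congr rfl fun p _ => ?_
    by_cases h : 1 ≤ p.1 ∧ 1 ≤ p.2 <;> simp [h]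
  have h2 : (∑ p ∈ Finset.HasAntidiagonal.antidiagonal (n + 1),
      if ¬(1 ≤ p.1 ∧ 1 ≤ p.2) then f p else 0) = f (0, n + 1) + f (n + 1, 0) := by
    rw [← Finset.sum_filter, hfe,
      Finset.sum_pair (by simp [Prod.ext_iff] : ((0 : ℕ), n + 1) ≠ (n + 1, 0))]
  rw [h1, Finset.sum_add_distrib, h2]
  abel


/-- a deformation of order `n` of a ResLieDer pair is extensible if and only
if its obstruction class is trivial (the obstruction cochain is a coboundary). -/
theorem stmt9
    {F : Type*} [Field F] [CharP F 2]
    {g : Type*} [LieRing g] [LieAlgebra F g]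
    (sq : g → g)
    (hsq_ad : ∀ x y : g, ⁅sq x, y⁆ = ⁅x, ⁅x, y⁆⁆)
    (hsq_smul : ∀ (a : F) (x : g), sq (a • x) = a ^ 2 • sq x)
    (hsq_add : ∀ x y : g, sq (x + y) = sq x + sq y + ⁅x, y⁆)
    (D : g →ₗ[F] g)
    (hD_br : ∀ x y : g, D ⁅x, y⁆ = ⁅D x, y⁆ + ⁅x, D y⁆)
    (hD_sq : ∀ x : g, D (sq x) = ⁅x, D x⁆)
    (n : ℕ) (hn : 1 ≤ n)
    -- a deformation of order n: families indexed by 0 ≤ i ≤ n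
    (μ : ℕ → g → g → g) (σ : ℕ → g → g) (Dd : ℕ → g →ₗ[F] g)
    (hμ₁ : ∀ (i : ℕ) (a : F) (x x' y : g), μ i (a • x + x') y = a • μ i x y + μ i x' y)
    (hμ₂ : ∀ (i : ℕ) (a : F) (x y y' : g), μ i x (a • y + y') = a • μ i x y + μ i x y')
    (hμalt : ∀ (i : ℕ) (x : g), μ i x x = 0)
    (hμ0 : ∀ x y : g, μ 0 x y = ⁅x, y⁆)
    (hσ0 : ∀ x : g, σ 0 x = sq x)
    (hD0 : Dd 0 = D)
    (hσ_smul : ∀ (i : ℕ) (a : F) (x : g), σ i (a • x) = a ^ 2 • σ i x)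
    (hσ_add : ∀ (i : ℕ) (x y : g), σ i (x + y) = σ i x + σ i y + μ i x y)
    (heq1 : ∀ k ≤ n, ∀ x y z : g,
      ∑ p ∈ Finset.HasAntidiagonal.antidiagonal k,
        (μ p.1 x (μ p.2 y z) + μ p.1 y (μ p.2 z x) + μ p.1 z (μ p.2 x y)) = 0)
    (heq2 : ∀ k ≤ n, ∀ x y : g,
      ∑ p ∈ Finset.HasAntidiagonal.antidiagonal k, (μ p.1 (σ p.2 x) y + μ p.1 x (μ p.2 x y)) = 0)
    (heq3 : ∀ k ≤ n, ∀ x y : g,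
      ∑ p ∈ Finset.HasAntidiagonal.antidiagonal k,
        (Dd p.1 (μ p.2 x y) + μ p.2 (Dd p.1 x) y + μ p.2 x (Dd p.1 y)) = 0)
    (heq4 : ∀ k ≤ n, ∀ x : g,
      ∑ p ∈ Finset.HasAntidiagonal.antidiagonal k, (Dd p.1 (σ p.2 x) + μ p.2 x (Dd p.1 x)) = 0) :
    -- the obstruction cochains
    (let ObI3 : g → g → g → g := fun x y z =>
      ∑ p ∈ Finset.HasAntidiagonal.antidiagonal (n + 1),
        if 1 ≤ p.1 ∧ 1 ≤ p.2 then
          μ p.1 x (μ p.2 y z) + μ p.1 y (μ p.2 z x) + μ p.1 z (μ p.2 x y)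
        else 0
     let ObII3 : g → g → g := fun x y =>
      ∑ p ∈ Finset.HasAntidiagonal.antidiagonal (n + 1),
        if 1 ≤ p.1 ∧ 1 ≤ p.2 then μ p.1 (σ p.2 x) y + μ p.1 x (μ p.2 x y) else 0
     let ObI2 : g → g → g := fun x y =>
      ∑ p ∈ Finset.HasAntidiagonal.antidiagonal (n + 1),
        if 1 ≤ p.1 ∧ 1 ≤ p.2 then
          Dd p.1 (μ p.2 x y) + μ p.2 x (Dd p.1 y) + μ p.2 y (Dd p.1 x)
        else 0
     let ObII2 : g → g := fun x =>
      ∑ p ∈ Finset.HasAntidiagonal.antidiagonal (n + 1),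
        if 1 ≤ p.1 ∧ 1 ≤ p.2 then Dd p.1 (σ p.2 x) + μ p.2 x (Dd p.1 x) else 0
     -- extensibility:
     (∃ (μn : g → g → g) (σn : g → g) (Dn : g →ₗ[F] g),
        (∀ (a : F) (x x' y : g), μn (a • x + x') y = a • μn x y + μn x' y) ∧
        (∀ (a : F) (x y y' : g), μn x (a • y + y') = a • μn x y + μn x y') ∧
        (∀ x : g, μn x x = 0) ∧
        (∀ (a : F) (x : g), σn (a • x) = a ^ 2 • σn x) ∧
        (∀ x y : g, σn (x + y) = σn x + σn y + μn x y) ∧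
        -- the four deformation equations also hold for k = n + 1, for the extended family
        (let μe := Function.update μ (n + 1) μn
         let σe := Function.update σ (n + 1) σn
         let De := Function.update Dd (n + 1) Dn
         ∀ x y z : g,
          (∑ p ∈ Finset.HasAntidiagonal.antidiagonal (n + 1),
            (μe p.1 x (μe p.2 y z) + μe p.1 y (μe p.2 z x) + μe p.1 z (μe p.2 x y)) = 0) ∧
          (∑ p ∈ Finset.HasAntidiagonal.antidiagonal (n + 1),
            (μe p.1 (σe p.2 x) y + μe p.1 x (μe p.2 x y)) = 0) ∧
          (∑ p ∈ Finset.HasAntidiagonal.antidiagonal (n + 1),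
            (De p.1 (μe p.2 x y) + μe p.2 (De p.1 x) y + μe p.2 x (De p.1 y)) = 0) ∧
          (∑ p ∈ Finset.HasAntidiagonal.antidiagonal (n + 1),
            (De p.1 (σe p.2 x) + μe p.2 x (De p.1 x)) = 0))) ↔
      -- the obstruction class is trivial:
      (∃ (μ' : g → g → g) (σ' : g → g) (D' : g →ₗ[F] g),
        (∀ (a : F) (x x' y : g), μ' (a • x + x') y = a • μ' x y + μ' x' y) ∧
        (∀ (a : F) (x y y' : g), μ' x (a • y + y') = a • μ' x y + μ' x y') ∧
        (∀ x : g, μ' x x = 0) ∧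
        (∀ (a : F) (x : g), σ' (a • x) = a ^ 2 • σ' x) ∧
        (∀ x y : g, σ' (x + y) = σ' x + σ' y + μ' x y) ∧
        (∀ x y z : g,
          ObI3 x y z =
            ⁅x, μ' y z⁆ + ⁅y, μ' z x⁆ + ⁅z, μ' x y⁆ +
              μ' ⁅x, y⁆ z + μ' ⁅y, z⁆ x + μ' ⁅z, x⁆ y) ∧
        (∀ x y : g,
          ObII3 x y = ⁅x, μ' x y⁆ + μ' (sq x) y + μ' ⁅x, y⁆ x + ⁅y, σ' x⁆) ∧
        (∀ x y : g,
          ObI2 x y =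
            D' ⁅x, y⁆ + ⁅x, D' y⁆ + ⁅y, D' x⁆ +
              D (μ' x y) + μ' (D x) y + μ' x (D y)) ∧
        (∀ x : g,
          ObII2 x = D' (sq x) + ⁅x, D' x⁆ + D (σ' x) + μ' x (D x)))) := by
  intro ObI3 ObII3 ObI2 ObII2
  -- characteristic-two helpers
  have char2g : ∀ z : g, z + z = 0 := by
    intro z
    have h2 : (2 : F) = 0 := by exact_mod_cast CharP.cast_eq_zero F 2
    calc z + z = (2 : F) • z := (two_smul F z).symm
    _ = 0 := by rw [h2, zero_smul]
  have eqz : ∀ a b : g, a + b = 0 ↔ a = b := by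
    intro a b
    constructor
    · intro h
      calc a = a + (b + b) := by rw [char2g, add_zero]
      _ = (a + b) + b := by rw [add_assoc]
      _ = b := by rw [h, zero_add]
    · intro h; rw [h]; exact char2g b
  have lieC : ∀ a b : g, ⁅a, b⁆ = ⁅b, a⁆ := by
    intro a b
    refine (eqz _ _).1 ?_
    rw [← lie_skew a b]; exact neg_add_cancel _
  have msymm : ∀ m : g → g → g,
      (∀ (a : F) (x x' y : g), m (a • x + x') y = a • m x y + m x' y) →
      (∀ (a : F) (x y y' : g), m x (a • y + y') = a • m x y + m x y') →
      (∀ x : g, m x x = 0) → ∀ x y : g, m x y = m y x := by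
    intro m h1 h2 halt x y
    have hL : ∀ u v w : g, m (u + v) w = m u w + m v w := by
      intro u v w; have := h1 1 u v w; simpa using this
    have hR : ∀ u v w : g, m u (v + w) = m u v + m u w := by
      intro u v w; have := h2 1 u v w; simpa using this
    have e1 : m (x + y) (x + y) = 0 := halt _
    rw [hL, hR, hR, halt, halt, zero_add, add_zero] at e1
    exact (eqz _ _).1 e1
  have hμsymm : ∀ (i : ℕ) (x y : g), μ i x y = μ i y x :=
    fun i => msymm (μ i) (hμ₁ i) (hμ₂ i) (hμalt i)
  have hne0 : (0 : ℕ) ≠ n + 1 := by omega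
  -- the four key computations
  have key1 : ∀ (μn : g → g → g) (x y z : g),
      (∑ p ∈ Finset.HasAntidiagonal.antidiagonal (n + 1),
        (Function.update μ (n + 1) μn p.1 x (Function.update μ (n + 1) μn p.2 y z)
          + Function.update μ (n + 1) μn p.1 y (Function.update μ (n + 1) μn p.2 z x)
          + Function.update μ (n + 1) μn p.1 z (Function.update μ (n + 1) μn p.2 x y)))
      = (⁅x, μn y z⁆ + ⁅y, μn z x⁆ + ⁅z, μn x y⁆
          + (μn x ⁅y, z⁆ + μn y ⁅z, x⁆ + μn z ⁅x, y⁆)) + ObI3 x y z := by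
    intro μn x y z
    rw [antidiag_split']
    have hmid : (∑ p ∈ Finset.HasAntidiagonal.antidiagonal (n + 1),
        if 1 ≤ p.1 ∧ 1 ≤ p.2 then
          Function.update μ (n + 1) μn p.1 x (Function.update μ (n + 1) μn p.2 y z)
            + Function.update μ (n + 1) μn p.1 y (Function.update μ (n + 1) μn p.2 z x)
            + Function.update μ (n + 1) μn p.1 z (Function.update μ (n + 1) μn p.2 x y)
          else 0) = ObI3 x y z := by
      refine Finset.sum_congr rfl fun p hp => ?_
      by_cases h : 1 ≤ p.1 ∧ 1 ≤ p.2
      · have hp' := Finset.HasAntidiagonal.mem_antidiagonal.mp hp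
        have h1 : p.1 ≠ n + 1 := by omega
        have h2 : p.2 ≠ n + 1 := by omega
        rw [if_pos h, if_pos h, Function.update_of_ne h1, Function.update_of_ne h2]
      · rw [if_neg h, if_neg h]
    rw [hmid]
    simp only [Function.update_of_ne hne0, Function.update_self, hμ0]
  have key2 : ∀ (μn : g → g → g) (σn : g → g) (x y : g),
      (∑ p ∈ Finset.HasAntidiagonal.antidiagonal (n + 1),
        (Function.update μ (n + 1) μn p.1 (Function.update σ (n + 1) σn p.2 x) y
          + Function.update μ (n + 1) μn p.1 x (Function.update μ (n + 1) μn p.2 x y)))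
      = (⁅σn x, y⁆ + ⁅x, μn x y⁆ + (μn (sq x) y + μn x ⁅x, y⁆)) + ObII3 x y := by
    intro μn σn x y
    rw [antidiag_split']
    have hmid : (∑ p ∈ Finset.HasAntidiagonal.antidiagonal (n + 1),
        if 1 ≤ p.1 ∧ 1 ≤ p.2 then
          Function.update μ (n + 1) μn p.1 (Function.update σ (n + 1) σn p.2 x) y
            + Function.update μ (n + 1) μn p.1 x (Function.update μ (n + 1) μn p.2 x y)
          else 0) = ObII3 x y := by
      refine Finset.sum_congr rfl fun p hp => ?_
      by_cases h : 1 ≤ p.1 ∧ 1 ≤ p.2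
      · have hp' := Finset.HasAntidiagonal.mem_antidiagonal.mp hp
        have h1 : p.1 ≠ n + 1 := by omega
        have h2 : p.2 ≠ n + 1 := by omega
        rw [if_pos h, if_pos h, Function.update_of_ne h1, Function.update_of_ne h2,
          Function.update_of_ne h2]
      · rw [if_neg h, if_neg h]
    rw [hmid]
    simp only [Function.update_of_ne hne0, Function.update_self, hμ0, hσ0]
  have key3 : ∀ (μn : g → g → g) (Dn : g →ₗ[F] g) (x y : g),
      (∑ p ∈ Finset.HasAntidiagonal.antidiagonal (n + 1),
        (Function.update Dd (n + 1) Dn p.1 (Function.update μ (n + 1) μn p.2 x y)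
          + Function.update μ (n + 1) μn p.2 (Function.update Dd (n + 1) Dn p.1 x) y
          + Function.update μ (n + 1) μn p.2 x (Function.update Dd (n + 1) Dn p.1 y)))
      = (D (μn x y) + μn (D x) y + μn x (D y)
          + (Dn ⁅x, y⁆ + ⁅Dn x, y⁆ + ⁅x, Dn y⁆)) + ObI2 x y := by
    intro μn Dn x y
    rw [antidiag_split']
    have hmid : (∑ p ∈ Finset.HasAntidiagonal.antidiagonal (n + 1),
        if 1 ≤ p.1 ∧ 1 ≤ p.2 then
          Function.update Dd (n + 1) Dn p.1 (Function.update μ (n + 1) μn p.2 x y)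
            + Function.update μ (n + 1) μn p.2 (Function.update Dd (n + 1) Dn p.1 x) y
            + Function.update μ (n + 1) μn p.2 x (Function.update Dd (n + 1) Dn p.1 y)
          else 0) = ObI2 x y := by
      refine Finset.sum_congr rfl fun p hp => ?_
      by_cases h : 1 ≤ p.1 ∧ 1 ≤ p.2
      · have hp' := Finset.HasAntidiagonal.mem_antidiagonal.mp hp
        have h1 : p.1 ≠ n + 1 := by omega
        have h2 : p.2 ≠ n + 1 := by omega
        rw [if_pos h, if_pos h, Function.update_of_ne h1, Function.update_of_ne h2,
          hμsymm p.2 (Dd p.1 x) y]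
        abel
      · rw [if_neg h, if_neg h]
    rw [hmid]
    simp only [Function.update_of_ne hne0, Function.update_self, hμ0, hD0]
  have key4 : ∀ (μn : g → g → g) (σn : g → g) (Dn : g →ₗ[F] g) (x : g),
      (∑ p ∈ Finset.HasAntidiagonal.antidiagonal (n + 1),
        (Function.update Dd (n + 1) Dn p.1 (Function.update σ (n + 1) σn p.2 x)
          + Function.update μ (n + 1) μn p.2 x (Function.update Dd (n + 1) Dn p.1 x)))
      = (D (σn x) + μn x (D x) + (Dn (sq x) + ⁅x, Dn x⁆)) + ObII2 x := by
    intro μn σn Dn x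
    rw [antidiag_split']
    have hmid : (∑ p ∈ Finset.HasAntidiagonal.antidiagonal (n + 1),
        if 1 ≤ p.1 ∧ 1 ≤ p.2 then
          Function.update Dd (n + 1) Dn p.1 (Function.update σ (n + 1) σn p.2 x)
            + Function.update μ (n + 1) μn p.2 x (Function.update Dd (n + 1) Dn p.1 x)
          else 0) = ObII2 x := by
      refine Finset.sum_congr rfl fun p hp => ?_
      by_cases h : 1 ≤ p.1 ∧ 1 ≤ p.2
      · have hp' := Finset.HasAntidiagonal.mem_antidiagonal.mp hp
        have h1 : p.1 ≠ n + 1 := by omega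
        have h2 : p.2 ≠ n + 1 := by omega
        rw [if_pos h, if_pos h, Function.update_of_ne h1, Function.update_of_ne h2,
          Function.update_of_ne h2]
      · rw [if_neg h, if_neg h]
    rw [hmid]
    simp only [Function.update_of_ne hne0, Function.update_self, hμ0, hσ0, hD0]
  constructor
  · rintro ⟨μn, σn, Dn, hb1, hb2, halt, hs1, hs2, heqs⟩
    have hsymm := msymm μn hb1 hb2 halt
    refine ⟨μn, σn, Dn, hb1, hb2, halt, hs1, hs2, ?_, ?_, ?_, ?_⟩
    · intro x y z
      have h := (heqs x y z).1
      rw [key1 μn x y z] at h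
      rw [((eqz _ _).1 h).symm, hsymm x ⁅y, z⁆, hsymm y ⁅z, x⁆, hsymm z ⁅x, y⁆]
      abel
    · intro x y
      have h := (heqs x y y).2.1
      rw [key2 μn σn x y] at h
      rw [((eqz _ _).1 h).symm, hsymm x ⁅x, y⁆, lieC (σn x) y]
      abel
    · intro x y
      have h := (heqs x y y).2.2.1
      rw [key3 μn Dn x y] at h
      rw [((eqz _ _).1 h).symm, lieC (Dn x) y]
      abel
    · intro x
      have h := (heqs x x x).2.2.2
      rw [key4 μn σn Dn x] at h
      rw [((eqz _ _).1 h).symm]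
      abel
  · rintro ⟨μ', σ', D', hb1, hb2, halt, hs1, hs2, hOb1, hOb2, hOb3, hOb4⟩
    have hsymm := msymm μ' hb1 hb2 halt
    refine ⟨μ', σ', D', hb1, hb2, halt, hs1, hs2, ?_⟩
    intro μe σe De x y z
    unfold μe σe De
    refine ⟨?_, ?_, ?_, ?_⟩
    · rw [key1 μ' x y z]
      refine (eqz _ _).2 ?_
      rw [hOb1 x y z, hsymm x ⁅y, z⁆, hsymm y ⁅z, x⁆, hsymm z ⁅x, y⁆]
      abel
    · rw [key2 μ' σ' x y]
      refine (eqz _ _).2 ?_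
      rw [hOb2 x y, hsymm x ⁅x, y⁆, lieC (σ' x) y]
      abel
    · rw [key3 μ' D' x y]
      refine (eqz _ _).2 ?_
      rw [hOb3 x y, lieC (D' x) y]
      abel
    · rw [key4 μ' σ' D' x]
      refine (eqz _ _).2 ?_
      rw [hOb4 x]
      abel
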